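/- arXiv:0709.0172 — 3 statements merged into one kernel-verified Lean document; each statement's English description precedes it below -/
import Mathlib

section
/- Let W ∈ ℝ^{N×N}. Then lim_{k→∞} W^k = (1/N)·1·1ᵀ if and only if 1ᵀW = 1ᵀ, W·1 = 1, and ρ(W − (1/N)·1·1ᵀ) < 1, where ρ denotes spectral radius. -/
open Matrix Filter

/-- Spectral radius of a real matrix: supremum of moduli of its complex eigenvalues. -/
noncomputable def specRad {n : ℕ} (M : Matrix (Fin n) (Fin n) ℝ) : ℝ :=
  sSup {r : ℝ | ∃ μ : ℂ, (M.map (fun x : ℝ => (x : ℂ))).charpoly.IsRoot μ ∧ r = ‖μ‖}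

open Polynomial
attribute [local instance] Matrix.linftyOpNormedAddCommGroup Matrix.linftyOpNormedRing
  Matrix.linftyOpNormedAlgebra

lemma entry_norm_le {m l : Type*} [Fintype m] [Fintype l] (A : Matrix m l ℂ) (i : m) (j : l) :
    ‖A i j‖ ≤ ‖A‖ := by
  have h1 : ‖A i j‖₊ ≤ ∑ j' : l, ‖A i j'‖₊ :=
    Finset.single_le_sum (f := fun j' => ‖A i j'‖₊) (fun _ _ => zero_le) (Finset.mem_univ j)
  have h2 : (∑ j' : l, ‖A i j'‖₊) ≤ ‖A‖₊ := by
    rw [Matrix.linfty_opNNNorm_def]; exact Finset.le_sup (f := fun i => ∑ j' : l, ‖A i j'‖₊) (Finset.mem_univ i)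
  exact_mod_cast h1.trans h2

lemma eval_charpoly {n : ℕ} (M : Matrix (Fin n) (Fin n) ℂ) (μ : ℂ) :
    M.charpoly.eval μ = (Matrix.diagonal (fun _ => μ) - M).det := by
  rw [Matrix.charpoly, ← Polynomial.coe_evalRingHom, RingHom.map_det]
  congr 1
  ext i j
  by_cases h : i = j <;>
    simp [Matrix.charmatrix_apply, Matrix.diagonal_apply, h]

lemma mem_spectrum_iff_isRoot {n : ℕ} (M : Matrix (Fin n) (Fin n) ℂ) (μ : ℂ) :
    μ ∈ spectrum ℂ M ↔ M.charpoly.IsRoot μ := by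
  rw [spectrum.mem_iff, Polynomial.IsRoot, eval_charpoly, Matrix.algebraMap_eq_diagonal,
    Matrix.isUnit_iff_isUnit_det, isUnit_iff_ne_zero, not_ne_iff]
  simp [Pi.algebraMap_def]


lemma specRad_lt_one_iff {n : ℕ} (hn : 0 < n) (M : Matrix (Fin n) (Fin n) ℝ) :
    specRad M < 1 ↔
      ∀ μ : ℂ, (M.map (fun x : ℝ => (x : ℂ))).charpoly.IsRoot μ → ‖μ‖ < 1 := by
  set p := (M.map (fun x : ℝ => (x : ℂ))).charpoly with hp
  have hpne : p ≠ 0 := (Matrix.charpoly_monic _).ne_zero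
  have hS : {r : ℝ | ∃ μ : ℂ, p.IsRoot μ ∧ r = ‖μ‖}
      = (fun μ : ℂ => ‖μ‖) '' {μ | p.IsRoot μ} := by
    ext r; simp [Set.mem_image, eq_comm]
  have hfin : ({r : ℝ | ∃ μ : ℂ, p.IsRoot μ ∧ r = ‖μ‖}).Finite := by
    rw [hS]; exact (Polynomial.finite_setOf_isRoot hpne).image _
  have hne : ({r : ℝ | ∃ μ : ℂ, p.IsRoot μ ∧ r = ‖μ‖}).Nonempty := by
    have hdeg : 0 < p.degree := by
      rw [hp, Matrix.charpoly_degree_eq_dim, Fintype.card_fin]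
      exact_mod_cast hn
    obtain ⟨μ, hμ⟩ := Complex.exists_root hdeg
    exact ⟨‖μ‖, μ, hμ, rfl⟩
  rw [specRad, Set.Finite.csSup_lt_iff hfin hne]
  constructor
  · intro h μ hμ; exact h _ ⟨μ, hμ, rfl⟩
  · rintro h r ⟨μ, hμ, rfl⟩; exact h μ hμ

lemma tendsto_pow_entries_zero_iff {n : ℕ} (hn : 0 < n) (M : Matrix (Fin n) (Fin n) ℝ) :
    (∀ i j, Tendsto (fun k => (M ^ k) i j) atTop (nhds (0 : ℝ))) ↔ specRad M < 1 := by
  have hnon : Nonempty (Fin n) := ⟨⟨0, hn⟩⟩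
  have hcs : CompleteSpace (Matrix (Fin n) (Fin n) ℂ) := FiniteDimensional.complete ℂ _
  set M' : Matrix (Fin n) (Fin n) ℂ := M.map (fun x : ℝ => (x : ℂ)) with hM'
  have hpow : ∀ k, M' ^ k = (M ^ k).map (fun x : ℝ => (x : ℂ)) := by
    intro k
    have h0 : M' = (Complex.ofRealHom : ℝ →+* ℂ).mapMatrix M := rfl
    rw [h0, ← map_pow]; rfl
  constructor
  · intro h
    rw [specRad_lt_one_iff hn]
    intro μ hμ
    have hdet : (Matrix.diagonal (fun _ => μ) - M').det = 0 := by
      rw [← eval_charpoly]; exact hμ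
    obtain ⟨v, hv0, hv⟩ := Matrix.exists_mulVec_eq_zero_iff.mpr hdet
    obtain ⟨j0, hj0⟩ := Function.ne_iff.mp hv0
    have hev : M' *ᵥ v = μ • v := by
      rw [Matrix.sub_mulVec, sub_eq_zero] at hv
      rw [← hv]
      ext i
      simp [Matrix.mulVec_diagonal]
    have hevk : ∀ k, (M' ^ k) *ᵥ v = μ ^ k • v := by
      intro k; induction k with
      | zero => simp
      | succ k ih =>
        rw [pow_succ', ← Matrix.mulVec_mulVec, ih, Matrix.mulVec_smul, hev, smul_smul,
          ← pow_succ]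
    have hten : Tendsto (fun k => ((M' ^ k) *ᵥ v) j0) atTop (nhds 0) := by
      have he : ∀ k, ((M' ^ k) *ᵥ v) j0 = ∑ l, ((M ^ k) j0 l : ℂ) * v l := by
        intro k; rw [hpow]; simp [Matrix.mulVec, dotProduct, Matrix.map_apply]
      simp_rw [he]
      have hs : Tendsto (fun k => ∑ l, ((M ^ k) j0 l : ℂ) * v l) atTop
          (nhds (∑ l : Fin n, (0 : ℂ) * v l)) := by
        refine tendsto_finset_sum _ (fun l _ => Tendsto.mul_const _ ?_)
        have := (Complex.continuous_ofReal.tendsto 0).comp (h j0 l)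
        simpa [Function.comp_def] using this
      simpa using hs
    have hμten : Tendsto (fun k => μ ^ k) atTop (nhds 0) := by
      have h2 : Tendsto (fun k => μ ^ k * v j0) atTop (nhds 0) := by
        have he : ∀ k, ((M' ^ k) *ᵥ v) j0 = μ ^ k * v j0 := fun k => by
          rw [hevk]; simp
        simpa [he] using hten
      have h3 := h2.mul_const (v j0)⁻¹
      simp only [Pi.zero_apply] at hj0
      simpa [mul_assoc, mul_inv_cancel₀ hj0] using h3
    by_contra hc
    push_neg at hc
    have hev1 : ∀ᶠ k : ℕ in atTop, ‖μ ^ k‖ < 1 := by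
      have := hμten.norm
      simp only [norm_zero] at this
      exact this.eventually_lt_const one_pos
    obtain ⟨k, hk⟩ := hev1.exists
    have : (1 : ℝ) ≤ ‖μ ^ k‖ := by
      rw [norm_pow]
      exact one_le_pow₀ hc
    linarith
  · intro h i j
    have hsp : spectralRadius ℂ M' < 1 := by
      rw [specRad_lt_one_iff hn] at h
      have := spectrum.spectralRadius_lt_of_forall_lt (a := M') (r := 1) ?_
      · exact_mod_cast this
      · intro z hz
        have habs := h z ((mem_spectrum_iff_isRoot M' z).mp hz)
        rw [← NNReal.coe_lt_coe]
        simpa using habs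
    obtain ⟨r, hr1, hr2⟩ := exists_between hsp
    have hrtop : r ≠ ⊤ := (hr2.trans_le le_top).ne
    set c : NNReal := r.toNNReal with hc
    have hrc : r = (c : ENNReal) := (ENNReal.coe_toNNReal hrtop).symm
    have hc1 : (c : ℝ) < 1 := by
      rw [hrc] at hr2
      exact_mod_cast hr2
    have hg := spectrum.pow_nnnorm_pow_one_div_tendsto_nhds_spectralRadius M'
    have hev : ∀ᶠ k : ℕ in atTop, (‖M' ^ k‖₊ : ENNReal) ^ (1 / (k : ℝ)) < r :=
      hg.eventually_lt_const hr1
    have hbound : ∀ᶠ k : ℕ in atTop, ‖M' ^ k‖ ≤ (c : ℝ) ^ k := by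
      filter_upwards [hev, eventually_ge_atTop 1] with k hk hk1
      have hkne : (k : ℝ) ≠ 0 := Nat.cast_ne_zero.mpr (by omega)
      have hx : (‖M' ^ k‖₊ : ENNReal) < r ^ k := by
        have h1 : ((‖M' ^ k‖₊ : ENNReal) ^ (1 / (k : ℝ))) ^ (k : ℝ) < r ^ (k : ℝ) :=
          ENNReal.rpow_lt_rpow hk (by positivity)
        rw [← ENNReal.rpow_natCast r k]
        rw [← ENNReal.rpow_mul, one_div, inv_mul_cancel₀ hkne, ENNReal.rpow_one] at h1
        exact h1
      rw [hrc, ← ENNReal.coe_pow, ENNReal.coe_lt_coe] at hx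
      have := hx.le
      rw [← NNReal.coe_le_coe] at this
      simpa using this
    have hnorm0 : Tendsto (fun k => ‖M' ^ k‖) atTop (nhds 0) := by
      refine squeeze_zero' (Eventually.of_forall fun k => norm_nonneg _) hbound ?_
      exact tendsto_pow_atTop_nhds_zero_of_lt_one (by positivity) hc1
    refine squeeze_zero_norm' ?_ hnorm0
    filter_upwards with k
    have : ‖(M ^ k) i j‖ = ‖(M' ^ k) i j‖ := by
      rw [hpow]; simp [Matrix.map_apply]
    rw [this]
    exact entry_norm_le _ i j

/-- `W^k → (1/N)·1·1ᵀ` iff `1ᵀW = 1ᵀ`, `W·1 = 1` and `ρ(W − (1/N)·1·1ᵀ) < 1`. -/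
theorem pow_tendsto_avg_iff {N : ℕ} (hN : 0 < N) (W : Matrix (Fin N) (Fin N) ℝ) :
    (∀ i j, Tendsto (fun k => (W ^ k) i j) atTop (nhds ((N : ℝ)⁻¹))) ↔
      (Matrix.vecMul (fun _ => 1) W = (fun _ => 1) ∧
       W *ᵥ (fun _ => 1) = (fun _ => 1) ∧
       specRad (W - Matrix.of fun _ _ => (N : ℝ)⁻¹) < 1) := by
  have hNR : (N : ℝ) ≠ 0 := Nat.cast_ne_zero.mpr hN.ne'
  set J : Matrix (Fin N) (Fin N) ℝ := Matrix.of fun _ _ => (N : ℝ)⁻¹ with hJ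
  have hJJ : J * J = J := by
    ext i j
    simp only [hJ, Matrix.mul_apply, Matrix.of_apply, Finset.sum_const, Finset.card_univ,
      Fintype.card_fin, nsmul_eq_mul]
    field_simp
  have hrow_mul : (∀ i, ∑ l, W i l = 1) → W * J = J := by
    intro hr; ext i j
    simp [hJ, Matrix.mul_apply, ← Finset.sum_mul, hr i]
  have hcol_mul : (∀ j, ∑ l, W l j = 1) → J * W = J := by
    intro hc; ext i j
    simp [hJ, Matrix.mul_apply, ← Finset.mul_sum, hc j]
  have hMk : W * J = J → J * W = J →
      ∀ k : ℕ, (W - J) ^ (k + 1) = W ^ (k + 1) - J := by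
    intro hWJ hJW
    have hWkJ : ∀ k : ℕ, W ^ (k + 1) * J = J := by
      intro k; induction k with
      | zero => simpa using hWJ
      | succ k ih => rw [pow_succ, mul_assoc, hWJ, ih]
    intro k; induction k with
    | zero => simp
    | succ k ih =>
      rw [pow_succ, ih, sub_mul, mul_sub, mul_sub, hWkJ, hJW, hJJ, ← pow_succ]
      abel
  constructor
  · intro h
    have hrow : ∀ i, ∑ l, W i l = 1 := by
      intro i
      have h1 : Tendsto (fun k => (W ^ (k + 1)) i i) atTop (nhds ((N : ℝ)⁻¹)) :=
        (h i i).comp (tendsto_add_atTop_nat 1)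
      have h2 : Tendsto (fun k => (W ^ (k + 1)) i i) atTop
          (nhds (∑ l, W i l * (N : ℝ)⁻¹)) := by
        have he : ∀ k, (W ^ (k + 1)) i i = ∑ l, W i l * (W ^ k) l i := by
          intro k; rw [pow_succ', Matrix.mul_apply]
        simp_rw [he]
        exact tendsto_finset_sum _ fun l _ => (h l i).const_mul _
      have h3 := tendsto_nhds_unique h2 h1
      rw [← Finset.sum_mul] at h3
      have := mul_right_cancel₀ (inv_ne_zero hNR) (h3.trans (one_mul (N : ℝ)⁻¹).symm)
      exact this
    have hcol : ∀ j, ∑ l, W l j = 1 := by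
      intro j
      have h1 : Tendsto (fun k => (W ^ (k + 1)) j j) atTop (nhds ((N : ℝ)⁻¹)) :=
        (h j j).comp (tendsto_add_atTop_nat 1)
      have h2 : Tendsto (fun k => (W ^ (k + 1)) j j) atTop
          (nhds (∑ l, (N : ℝ)⁻¹ * W l j)) := by
        have he : ∀ k, (W ^ (k + 1)) j j = ∑ l, (W ^ k) j l * W l j := by
          intro k; rw [pow_succ, Matrix.mul_apply]
        simp_rw [he]
        exact tendsto_finset_sum _ fun l _ => (h j l).mul_const _
      have h3 := tendsto_nhds_unique h2 h1
      rw [← Finset.mul_sum] at h3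
      have h4 : (N : ℝ)⁻¹ * ∑ l, W l j = (N : ℝ)⁻¹ * 1 := by rw [h3, mul_one]
      exact mul_left_cancel₀ (inv_ne_zero hNR) h4
    refine ⟨?_, ?_, ?_⟩
    · funext j
      simp [Matrix.vecMul, dotProduct, hcol j]
    · funext i
      simp [Matrix.mulVec, dotProduct, hrow i]
    · rw [← tendsto_pow_entries_zero_iff hN]
      intro i j
      have hbase : Tendsto (fun k => (W ^ k) i j - (N : ℝ)⁻¹) atTop (nhds 0) := by
        simpa using (h i j).sub_const (N : ℝ)⁻¹
      refine Tendsto.congr' ?_ hbase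
      filter_upwards [eventually_ge_atTop 1] with k hk
      obtain ⟨k', rfl⟩ : ∃ k', k = k' + 1 := ⟨k - 1, by omega⟩
      rw [hMk (hrow_mul hrow) (hcol_mul hcol) k']
      simp [hJ]
  · rintro ⟨h1, h2, h3⟩
    have hrow : ∀ i, ∑ l, W i l = 1 := by
      intro i
      have := congrFun h2 i
      simpa [Matrix.mulVec, dotProduct] using this
    have hcol : ∀ j, ∑ l, W l j = 1 := by
      intro j
      have := congrFun h1 j
      simpa [Matrix.vecMul, dotProduct] using this

    have hM0 := (tendsto_pow_entries_zero_iff hN (W - J)).mpr h3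
    intro i j
    have hbase : Tendsto (fun k => ((W - J) ^ k) i j + (N : ℝ)⁻¹) atTop
        (nhds ((N : ℝ)⁻¹)) := by
      simpa using (hM0 i j).add_const (N : ℝ)⁻¹
    refine Tendsto.congr' ?_ hbase
    filter_upwards [eventually_ge_atTop 1] with k hk
    obtain ⟨k', rfl⟩ : ∃ k', k = k' + 1 := ⟨k - 1, by omega⟩
    rw [hMk (hrow_mul hrow) (hcol_mul hcol) k']
    simp [hJ]
end

section
/- Let W ∈ ℝ^{N×N} satisfy 1ᵀW = 1ᵀ, W·1 = 1, and suppose W has a simple eigenvalue at 1 with all other eigenvalues in the open unit disk. Then for any initial state x(0) ∈ ℝ^N, the iteration x(k+1) = W x(k) converges to x̄(0)·1, where x̄(0) = (1/N)Σ_{i=1}^N x_i(0); that is, average-consensus is reached asymptotically. -/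
open Matrix Filter Polynomial

attribute [local instance] Matrix.linftyOpNormedAddCommGroup Matrix.linftyOpNormedRing
  Matrix.linftyOpNormedAlgebra

private lemma eval_charpoly_eq' {n : Type*} [DecidableEq n] [Fintype n] (M : Matrix n n ℂ)
    (x : ℂ) : M.charpoly.eval x = (x • (1 : Matrix n n ℂ) - M).det := by
  rw [Matrix.charpoly, ← Polynomial.coe_evalRingHom, RingHom.map_det]
  congr 1
  ext i j
  by_cases h : i = j <;>
    simp [charmatrix_apply, Matrix.one_apply, Matrix.diagonal_apply, h]

private lemma spectrum_subset_roots' {n : Type*} [DecidableEq n] [Fintype n] (M : Matrix n n ℂ)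
    (μ : ℂ) (hμ : μ ∈ spectrum ℂ M) : M.charpoly.IsRoot μ := by
  rw [spectrum.mem_iff] at hμ
  rw [IsRoot, eval_charpoly_eq']
  by_contra hdet
  rw [Algebra.algebraMap_eq_smul_one] at hμ
  exact hμ ((Matrix.isUnit_iff_isUnit_det _).2 (Ne.isUnit hdet))

attribute [local instance] Matrix.linftyOpNormedAddCommGroup Matrix.linftyOpNormedRing
  Matrix.linftyOpNormedAlgebra

private lemma pow_norm_tendsto_zero' {n : Type*} [DecidableEq n] [Fintype n] (A : Matrix n n ℂ)
    (h : ∀ μ : ℂ, A.charpoly.IsRoot μ → ‖μ‖₊ < 1) :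
    Tendsto (fun k => ‖A ^ k‖) atTop (nhds 0) := by
  haveI : CompleteSpace (Matrix n n ℂ) := FiniteDimensional.complete ℂ _
  have hρ : spectralRadius ℂ A < 1 := by
    set s := A.charpoly.roots.toFinset with hs
    set c : NNReal := s.sup (fun μ => ‖μ‖₊) with hc
    have hcp : A.charpoly ≠ 0 := (Matrix.charpoly_monic A).ne_zero
    have hle : spectralRadius ℂ A ≤ (c : ENNReal) := by
      rw [spectralRadius]
      apply iSup₂_le
      intro μ hμ
      have : μ ∈ s := by
        rw [hs, Multiset.mem_toFinset, Polynomial.mem_roots hcp]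
        exact spectrum_subset_roots' A μ hμ
      exact_mod_cast ENNReal.coe_le_coe.2 (Finset.le_sup (f := fun μ => ‖μ‖₊) this)
    have hclt : c < 1 := by
      rw [hc, Finset.sup_lt_iff (by norm_num : (⊥ : NNReal) < 1)]
      intro μ hμ
      exact h μ ((Polynomial.mem_roots hcp).1 (Multiset.mem_toFinset.1 hμ))
    exact lt_of_le_of_lt hle (ENNReal.coe_lt_one_iff.2 hclt)
  obtain ⟨r, hr1, hr2⟩ := ENNReal.lt_iff_exists_nnreal_btwn.1 hρ
  have hG := spectrum.pow_nnnorm_pow_one_div_tendsto_nhds_spectralRadius A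
  have hev : ∀ᶠ k : ℕ in atTop, (‖A ^ k‖₊ : ENNReal) ^ (1 / (k:ℝ)) < (r : ENNReal) :=
    hG.eventually_lt_const hr1
  have hr1' : (r : ℝ) < 1 := by exact_mod_cast ENNReal.coe_lt_one_iff.1 hr2
  have key : ∀ᶠ k : ℕ in atTop, ‖A ^ k‖ ≤ (r : ℝ) ^ k := by
    filter_upwards [hev, eventually_ge_atTop 1] with k hk hk1
    have hk0 : (k : ℝ) ≠ 0 := Nat.cast_ne_zero.2 (by omega)
    have : ((‖A ^ k‖₊ : ENNReal) ^ (1 / (k:ℝ))) ^ (k : ℝ) ≤ ((r : ENNReal)) ^ (k : ℝ) :=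
      ENNReal.rpow_le_rpow hk.le (by positivity)
    rw [← ENNReal.rpow_mul, one_div, inv_mul_cancel₀ hk0, ENNReal.rpow_one,
      ENNReal.rpow_natCast, ← ENNReal.coe_pow, ENNReal.coe_le_coe] at this
    calc ‖A ^ k‖ = ((‖A ^ k‖₊ : ℝ)) := rfl
    _ ≤ ((r ^ k : NNReal) : ℝ) := by exact_mod_cast this
    _ = (r:ℝ) ^ k := by push_cast; ring
  exact squeeze_zero' (Eventually.of_forall fun k => norm_nonneg _) key
    (tendsto_pow_atTop_nhds_zero_of_lt_one r.2 hr1')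

private lemma charpoly_identity' {N : ℕ} (hN : 0 < N) (Wc : Matrix (Fin N) (Fin N) ℂ)
    (hcol : ∀ j, ∑ i, Wc i j = 1) :
    (X - C 1) * (Wc - Matrix.of fun _ _ => (N:ℂ)⁻¹).charpoly = X * Wc.charpoly := by
  set Pm : Matrix (Fin N) (Fin N) ℂ := Matrix.of fun _ _ => (N:ℂ)⁻¹ with hPm
  apply Polynomial.eq_of_infinite_eval_eq
  have hfin : ({1} ∪ {x : ℂ | Wc.charpoly.IsRoot x}).Finite :=
    (Set.finite_singleton 1).union (Polynomial.finite_setOf_isRoot (Wc.charpoly_monic).ne_zero)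
  apply Set.Infinite.mono (s := ({1} ∪ {x : ℂ | Wc.charpoly.IsRoot x})ᶜ)
  swap
  · exact hfin.infinite_compl
  intro x hx
  simp only [Set.mem_compl_iff, Set.mem_union, Set.mem_singleton_iff, Set.mem_setOf_eq,
    not_or] at hx
  obtain ⟨hx1, hxroot⟩ := hx
  have hx1' : x - 1 ≠ 0 := sub_ne_zero.2 hx1
  set B := x • (1 : Matrix (Fin N) (Fin N) ℂ) - Wc with hB
  have hdet : B.det ≠ 0 := by
    rw [← eval_charpoly_eq']; exact hxroot
  have hdu : IsUnit B.det := Ne.isUnit hdet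
  set u : Fin N → ℂ := fun _ => (N : ℂ)⁻¹ with hu
  set v : Fin N → ℂ := fun _ => 1 with hv
  have hP : Pm = replicateCol Unit u * replicateRow Unit v := by
    ext i j
    simp [Matrix.mul_apply, hu, hv, hPm]
  have hvB : v ᵥ* B = (x - 1) • v := by
    ext j
    simp only [vecMul, dotProduct, hB, Matrix.sub_apply, Matrix.smul_apply, Matrix.one_apply, hv,
      one_mul, Pi.smul_apply, smul_eq_mul, mul_one]
    rw [Finset.sum_sub_distrib, hcol j]
    simp [Finset.sum_ite_eq' Finset.univ j (fun _ => x)]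
  have hvBinv : v ᵥ* B⁻¹ = (x - 1)⁻¹ • v := by
    have h1 : (v ᵥ* B) ᵥ* B⁻¹ = v := by
      rw [Matrix.vecMul_vecMul, Matrix.mul_nonsing_inv _ hdu, Matrix.vecMul_one]
    rw [hvB, Matrix.smul_vecMul] at h1
    calc v ᵥ* B⁻¹ = (x-1)⁻¹ • ((x - 1) • (v ᵥ* B⁻¹)) := by
          rw [smul_smul, inv_mul_cancel₀ hx1', one_smul]
    _ = (x - 1)⁻¹ • v := by rw [h1]
  have hNc : (N : ℂ) ≠ 0 := Nat.cast_ne_zero.2 hN.ne'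
  have hdet1 : (1 + replicateRow Unit v * B⁻¹ * replicateCol Unit u).det = 1 + (x-1)⁻¹ := by
    have hrow1 : replicateRow Unit v * B⁻¹ * replicateCol Unit u = replicateRow Unit ((x - 1)⁻¹ • v) * replicateCol Unit u := by
      rw [← Matrix.replicateRow_vecMul, hvBinv]
    rw [hrow1, Matrix.det_unique, Matrix.add_apply, Matrix.one_apply_eq]
    congr 1
    rw [Matrix.mul_apply]
    simp only [Matrix.replicateRow_apply, Matrix.replicateCol_apply, Pi.smul_apply, hv, hu, smul_eq_mul, mul_one,
      Finset.sum_const, Finset.card_univ, Fintype.card_fin, nsmul_eq_mul]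
    field_simp
  have hcalc : (x • (1 : Matrix (Fin N) (Fin N) ℂ) - (Wc - Pm)).det = B.det * (1 + (x-1)⁻¹) := by
    have hsplit : x • (1 : Matrix (Fin N) (Fin N) ℂ) - (Wc - Pm) = B + replicateCol Unit u * replicateRow Unit v := by
      rw [← hP, hB]; abel
    rw [hsplit, Matrix.det_add_replicateCol_mul_replicateRow hdu, hdet1]
  have hL : ((X - C 1) * (Wc - Pm).charpoly).eval x = (x - 1) * (B.det * (1 + (x-1)⁻¹)) := by
    rw [eval_mul, eval_sub, eval_X, eval_C, eval_charpoly_eq', hcalc]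
  simp only [Set.mem_setOf_eq]
  rw [hL, eval_mul, eval_X, eval_charpoly_eq', ← hB]
  field_simp
  ring

/-- If `1ᵀW = 1ᵀ`, `W·1 = 1`, `W` has a simple eigenvalue at `1` and all other
eigenvalues in the open unit disk, then the iteration `x(k+1) = W x(k)` converges to
`x̄(0)·1` for every initial state, i.e. average-consensus is reached asymptotically. -/
theorem average_consensus_of_simple_eig {N : ℕ} (hN : 0 < N) (W : Matrix (Fin N) (Fin N) ℝ)
    (h1 : Matrix.vecMul (fun _ => 1) W = (fun _ => 1))
    (h2 : W *ᵥ (fun _ => 1) = (fun _ => 1))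
    (hsimple : ((W.map (fun x : ℝ => (x : ℂ))).charpoly).rootMultiplicity 1 = 1)
    (hothers : ∀ μ : ℂ, (W.map (fun x : ℝ => (x : ℂ))).charpoly.IsRoot μ → μ ≠ 1 →
      ‖μ‖ < 1) :
    ∀ x0 : Fin N → ℝ, ∀ i, Tendsto (fun k => ((W ^ k) *ᵥ x0) i) atTop
      (nhds ((N : ℝ)⁻¹ * ∑ j, x0 j)) := by
  intro x0 i
  set Wc : Matrix (Fin N) (Fin N) ℂ := W.map (fun x : ℝ => (x : ℂ)) with hWc
  set Pm : Matrix (Fin N) (Fin N) ℂ := Matrix.of fun _ _ => (N:ℂ)⁻¹ with hPmdef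
  set A : Matrix (Fin N) (Fin N) ℂ := Wc - Pm with hA
  have hNc : (N : ℂ) ≠ 0 := Nat.cast_ne_zero.2 hN.ne'
  -- row and column sums over ℂ
  have hrow : ∀ i, ∑ j, Wc i j = 1 := by
    intro i
    have := congrFun h2 i
    simp only [mulVec, dotProduct, mul_one] at this
    rw [hWc]
    simp only [Matrix.map_apply]
    rw [← Complex.ofReal_sum]
    norm_cast
  have hcol : ∀ j, ∑ i, Wc i j = 1 := by
    intro j
    have := congrFun h1 j
    simp only [vecMul, dotProduct, one_mul] at this
    rw [hWc]
    simp only [Matrix.map_apply]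
    rw [← Complex.ofReal_sum]
    norm_cast
  -- algebraic identities
  have hWP : Wc * Pm = Pm := by
    ext i j
    simp only [Matrix.mul_apply, hPmdef, Matrix.of_apply, ← Finset.sum_mul, hrow i, one_mul]
  have hPW : Pm * Wc = Pm := by
    ext i j
    simp only [Matrix.mul_apply, hPmdef, Matrix.of_apply]
    rw [← Finset.mul_sum, hcol j, mul_one]
  have hPP : Pm * Pm = Pm := by
    ext i j
    simp only [Matrix.mul_apply, hPmdef, Matrix.of_apply, Finset.sum_const, Finset.card_univ,
      Fintype.card_fin, nsmul_eq_mul]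
    field_simp
  have hAP : A * Pm = 0 := by rw [hA, Matrix.sub_mul, hWP, hPP, sub_self]
  have hPA : Pm * A = 0 := by rw [hA, Matrix.mul_sub, hPW, hPP, sub_self]
  have hpowk : ∀ k : ℕ, 1 ≤ k → Wc ^ k = A ^ k + Pm := by
    intro k hk
    induction k, hk using Nat.le_induction with
    | base => simp [hA]
    | succ k hk ih =>
      have hAkP : A ^ k * Pm = 0 := by
        obtain ⟨m, rfl⟩ := Nat.exists_eq_add_of_le hk
        rw [add_comm, pow_add, pow_one, Matrix.mul_assoc, hAP, Matrix.mul_zero]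
      rw [pow_succ, ih, Matrix.add_mul, hPW]
      have hWeq : Wc = A + Pm := by rw [hA]; abel
      calc A ^ k * Wc + Pm = A ^ k * (A + Pm) + Pm := by rw [← hWeq]
        _ = A ^ (k+1) + Pm := by rw [Matrix.mul_add, hAkP, add_zero, pow_succ]
  -- root bounds for A
  have hApne : A.charpoly ≠ 0 := (Matrix.charpoly_monic A).ne_zero
  have hid := charpoly_identity' hN Wc hcol
  rw [← hPmdef, ← hA] at hid
  have hnotroot : ¬ A.charpoly.IsRoot 1 := by
    have hL : ((X - C 1) * A.charpoly).rootMultiplicity 1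
        = 1 + A.charpoly.rootMultiplicity 1 := by
      rw [Polynomial.rootMultiplicity_mul (mul_ne_zero (X_sub_C_ne_zero 1) hApne),
        Polynomial.rootMultiplicity_X_sub_C_self]
    have hR : ((X : ℂ[X]) * Wc.charpoly).rootMultiplicity 1 = 1 := by
      rw [Polynomial.rootMultiplicity_mul
        (mul_ne_zero Polynomial.X_ne_zero (Matrix.charpoly_monic Wc).ne_zero)]
      rw [Polynomial.rootMultiplicity_eq_zero (by simp [Polynomial.IsRoot]), zero_add]
      exact hsimple
    have heq := congrArg (Polynomial.rootMultiplicity 1) hid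
    rw [hL, hR] at heq
    intro hroot
    have h0 : A.charpoly.rootMultiplicity 1 = 0 := by omega
    rw [Polynomial.rootMultiplicity_eq_zero_iff] at h0
    exact hApne (h0 hroot)
  have hroots : ∀ μ : ℂ, A.charpoly.IsRoot μ → ‖μ‖₊ < 1 := by
    intro μ hμ
    by_cases hμ0 : μ = 0
    · simp [hμ0]
    · have hev := congrArg (Polynomial.eval μ) hid
      simp only [eval_mul, eval_sub, eval_X, eval_C, hμ.eq_zero, mul_zero] at hev
      have hWroot : Wc.charpoly.IsRoot μ := by
        rcases mul_eq_zero.1 hev.symm with h | h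
        · exact absurd h hμ0
        · exact h
      have hμ1 : μ ≠ 1 := fun h => hnotroot (h ▸ hμ)
      have := hothers μ hWroot hμ1
      exact_mod_cast this
  have htend0 := pow_norm_tendsto_zero' A hroots
  -- translating back to ℝ
  set x0c : Fin N → ℂ := fun j => (x0 j : ℂ) with hx0c
  have hmap : ∀ k : ℕ, (W ^ k).map (fun x : ℝ => (x : ℂ)) = Wc ^ k := by
    intro k
    induction k with
    | zero => simp [Matrix.map_one]
    | succ k ih =>
      rw [pow_succ, pow_succ, ← ih]
      exact Matrix.map_mul (f := Complex.ofRealHom)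
  have hentry : ∀ k : ℕ, (((W ^ k) *ᵥ x0) i : ℂ) = ((Wc ^ k) *ᵥ x0c) i := by
    intro k
    rw [← hmap k]
    simp only [mulVec, dotProduct, Matrix.map_apply, hx0c]
    push_cast
    rfl
  have hPv : (Pm *ᵥ x0c) i = (N : ℂ)⁻¹ * ∑ j, (x0 j : ℂ) := by
    simp only [mulVec, dotProduct, hPmdef, Matrix.of_apply, hx0c, ← Finset.mul_sum]
  rw [tendsto_iff_norm_sub_tendsto_zero]
  refine squeeze_zero' (Eventually.of_forall fun k => norm_nonneg _)
    (g := fun k => ‖A ^ k‖ * ‖x0c‖) ?_ ?_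
  · filter_upwards [eventually_ge_atTop 1] with k hk
    have hWk := hpowk k hk
    have hkey : ((((W ^ k) *ᵥ x0) i - ((N:ℝ)⁻¹ * ∑ j, x0 j) : ℝ) : ℂ) = ((A ^ k) *ᵥ x0c) i := by
      have : ((A ^ k) *ᵥ x0c) i = ((Wc ^ k) *ᵥ x0c) i - (Pm *ᵥ x0c) i := by
        rw [hWk, Matrix.add_mulVec, Pi.add_apply]
        ring
      rw [this, ← hentry k, hPv]
      push_cast
      ring
    have hnorm : ‖((W ^ k) *ᵥ x0) i - ((N:ℝ)⁻¹ * ∑ j, x0 j)‖ = ‖((A ^ k) *ᵥ x0c) i‖ := by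
      rw [← hkey, Complex.norm_real]
    rw [hnorm]
    exact le_trans (norm_le_pi_norm _ i) (Matrix.linfty_opNorm_mulVec _ _)
  · simpa using htend0.mul_const ‖x0c‖
end

section
/- Let L ∈ ℝ^{N×N} be the Laplacian of a strongly connected balanced digraph and let 0 < ε < 1/d_max with d_max = max_i l_{ii}. Then P_ε = I − εL is a doubly stochastic matrix (nonnegative entries, row sums and column sums equal to 1) with positive diagonal, and consequently x(k+1) = P_ε x(k) converges to x̄(0)·1 for every x(0). -/
open Matrix Filter Finset

lemma pow_entry_nonneg {N : ℕ} (P : Matrix (Fin N) (Fin N) ℝ) (hP : ∀ i j, 0 ≤ P i j) :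
    ∀ n i j, 0 ≤ (P ^ n) i j := by
  intro n
  induction n with
  | zero =>
    intro i j
    by_cases h : i = j <;> simp [Matrix.one_apply, h]
  | succ n ih =>
    intro i j
    rw [pow_succ, Matrix.mul_apply]
    exact Finset.sum_nonneg fun t _ => mul_nonneg (ih i t) (hP t j)

lemma pow_entry_pos_step {N : ℕ} (P : Matrix (Fin N) (Fin N) ℝ) (hP : ∀ i j, 0 ≤ P i j)
    {n : ℕ} {i b c : Fin N} (h1 : 0 < (P ^ n) i b) (h2 : 0 < P b c) :
    0 < (P ^ (n + 1)) i c := by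
  rw [pow_succ, Matrix.mul_apply]
  exact Finset.sum_pos' (fun t _ => mul_nonneg (pow_entry_nonneg P hP n i t) (hP t c))
    ⟨b, Finset.mem_univ b, mul_pos h1 h2⟩

lemma pow_entry_eventually_pos {N : ℕ} (P : Matrix (Fin N) (Fin N) ℝ)
    (hP : ∀ i j, 0 ≤ P i j) (hdiag : ∀ i, 0 < P i i) {i j : Fin N}
    (h : Relation.ReflTransGen (fun p q => 0 < P p q) i j) :
    ∃ k, ∀ n ≥ k, 0 < (P ^ n) i j := by
  induction h with
  | refl =>
    refine ⟨0, fun n hn => ?_⟩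
    clear hn
    induction n with
    | zero => simp [Matrix.one_apply]
    | succ n ih => exact pow_entry_pos_step P hP ih (hdiag i)
  | @tail b c hab hbc ih =>
    obtain ⟨k, hk⟩ := ih
    refine ⟨k + 1, fun n hn => ?_⟩
    obtain ⟨n', rfl⟩ : ∃ n', n = n' + 1 := ⟨n - 1, by omega⟩
    exact pow_entry_pos_step P hP (hk n' (by omega)) hbc

lemma mulVec_le_sup {N : ℕ} (ne : (univ : Finset (Fin N)).Nonempty)
    (Q : Matrix (Fin N) (Fin N) ℝ) (δ : ℝ)
    (hδ0 : 0 ≤ δ) (hδ : ∀ i j, δ ≤ Q i j) (hrow : ∀ i, ∑ j, Q i j = 1)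
    (y : Fin N → ℝ) (i : Fin N) :
    (Q *ᵥ y) i ≤ univ.sup' ne y - δ * (univ.sup' ne y - univ.inf' ne y) := by
  obtain ⟨j0, hj0mem, hj0⟩ := Finset.exists_mem_eq_inf' ne y
  have hQ0 : ∀ p q, (0:ℝ) ≤ Q p q := fun p q => le_trans hδ0 (hδ p q)
  have hsplit : (Q *ᵥ y) i = Q i j0 * y j0 + ∑ j ∈ univ.erase j0, Q i j * y j := by
    simp only [Matrix.mulVec, dotProduct]
    exact (Finset.add_sum_erase _ _ hj0mem).symm
  have hS : ∑ j ∈ univ.erase j0, Q i j = 1 - Q i j0 := by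
    have := Finset.add_sum_erase univ (fun j => Q i j) hj0mem
    rw [hrow i] at this; linarith
  have hle : ∑ j ∈ univ.erase j0, Q i j * y j ≤ (1 - Q i j0) * univ.sup' ne y := by
    rw [← hS, Finset.sum_mul]
    exact Finset.sum_le_sum fun j _ =>
      mul_le_mul_of_nonneg_left (Finset.le_sup' y (Finset.mem_univ j)) (hQ0 i j)
  have hMm : univ.inf' ne y ≤ univ.sup' ne y := by
    exact le_trans (Finset.inf'_le y hj0mem) (Finset.le_sup' y hj0mem)
  have key : δ * (univ.sup' ne y - univ.inf' ne y) ≤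
      Q i j0 * (univ.sup' ne y - univ.inf' ne y) :=
    mul_le_mul_of_nonneg_right (hδ i j0) (sub_nonneg.mpr hMm)
  rw [hsplit, ← hj0]
  nlinarith [hle, key]

lemma inf_le_mulVec {N : ℕ} (ne : (univ : Finset (Fin N)).Nonempty)
    (Q : Matrix (Fin N) (Fin N) ℝ) (δ : ℝ)
    (hδ0 : 0 ≤ δ) (hδ : ∀ i j, δ ≤ Q i j) (hrow : ∀ i, ∑ j, Q i j = 1)
    (y : Fin N → ℝ) (i : Fin N) :
    univ.inf' ne y + δ * (univ.sup' ne y - univ.inf' ne y) ≤ (Q *ᵥ y) i := by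
  obtain ⟨j0, hj0mem, hj0⟩ := Finset.exists_mem_eq_sup' ne y
  have hQ0 : ∀ p q, (0:ℝ) ≤ Q p q := fun p q => le_trans hδ0 (hδ p q)
  have hsplit : (Q *ᵥ y) i = Q i j0 * y j0 + ∑ j ∈ univ.erase j0, Q i j * y j := by
    simp only [Matrix.mulVec, dotProduct]
    exact (Finset.add_sum_erase _ _ hj0mem).symm
  have hS : ∑ j ∈ univ.erase j0, Q i j = 1 - Q i j0 := by
    have := Finset.add_sum_erase univ (fun j => Q i j) hj0mem
    rw [hrow i] at this; linarith
  have hle : (1 - Q i j0) * univ.inf' ne y ≤ ∑ j ∈ univ.erase j0, Q i j * y j := by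
    rw [← hS, Finset.sum_mul]
    exact Finset.sum_le_sum fun j _ =>
      mul_le_mul_of_nonneg_left (Finset.inf'_le y (Finset.mem_univ j)) (hQ0 i j)
  have hMm : univ.inf' ne y ≤ univ.sup' ne y := by
    exact le_trans (Finset.inf'_le y hj0mem) (Finset.le_sup' y hj0mem)
  have key : δ * (univ.sup' ne y - univ.inf' ne y) ≤
      Q i j0 * (univ.sup' ne y - univ.inf' ne y) :=
    mul_le_mul_of_nonneg_right (hδ i j0) (sub_nonneg.mpr hMm)
  rw [hsplit, ← hj0]
  nlinarith [hle, key]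

lemma spread_contract {N : ℕ} (ne : (univ : Finset (Fin N)).Nonempty)
    (Q : Matrix (Fin N) (Fin N) ℝ) (δ : ℝ)
    (hδ0 : 0 ≤ δ) (hδ : ∀ i j, δ ≤ Q i j) (hrow : ∀ i, ∑ j, Q i j = 1)
    (y : Fin N → ℝ) :
    univ.sup' ne (Q *ᵥ y) - univ.inf' ne (Q *ᵥ y) ≤
      (1 - δ) * (univ.sup' ne y - univ.inf' ne y) := by
  have h1 : univ.sup' ne (Q *ᵥ y) ≤
      univ.sup' ne y - δ * (univ.sup' ne y - univ.inf' ne y) :=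
    Finset.sup'_le ne _ fun i _ => mulVec_le_sup ne Q δ hδ0 hδ hrow y i
  have h2 : univ.inf' ne y + δ * (univ.sup' ne y - univ.inf' ne y) ≤
      univ.inf' ne (Q *ᵥ y) :=
    Finset.le_inf' ne _ fun i _ => inf_le_mulVec ne Q δ hδ0 hδ hrow y i
  obtain ⟨j0, hj0mem, -⟩ := Finset.exists_mem_eq_sup' ne y
  have hMm : univ.inf' ne y ≤ univ.sup' ne y :=
    le_trans (Finset.inf'_le y hj0mem) (Finset.le_sup' y hj0mem)
  nlinarith [mul_nonneg hδ0 (sub_nonneg.mpr hMm)]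

/-- For the Laplacian `L` of a strongly connected balanced digraph and
`0 < ε < 1/d_max`, the matrix `P_ε = I − εL` is doubly stochastic with positive
diagonal, and the routine iteration `x(k+1) = P_ε x(k)` converges to `x̄(0)·1`. -/
theorem routine_protocol_consensus {N : ℕ} (hN : 0 < N)
    (a L : Matrix (Fin N) (Fin N) ℝ)
    (ha : ∀ i j, 0 ≤ a i j)
    (hbal : ∀ i, ∑ j, a i j = ∑ j, a j i)
    (hdiag : ∀ i, L i i = ∑ j ∈ Finset.univ \ {i}, a i j)
    (hoff : ∀ i j, i ≠ j → L i j = - a i j)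
    (hconn : ∀ i j : Fin N, Relation.ReflTransGen (fun p q => p ≠ q ∧ 0 < a p q) i j)
    (ε : ℝ) (hε : 0 < ε) (hε' : ε < 1 / (⨆ i, L i i)) :
    (∀ i j, 0 ≤ ((1 : Matrix (Fin N) (Fin N) ℝ) - ε • L) i j) ∧
    (((1 : Matrix (Fin N) (Fin N) ℝ) - ε • L) *ᵥ (fun _ => 1) = (fun _ => 1)) ∧
    (Matrix.vecMul (fun _ => 1) ((1 : Matrix (Fin N) (Fin N) ℝ) - ε • L) = (fun _ => 1)) ∧
    (∀ i, 0 < ((1 : Matrix (Fin N) (Fin N) ℝ) - ε • L) i i) ∧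
    ∀ x0 : Fin N → ℝ, ∀ i, Tendsto
      (fun k => ((((1 : Matrix (Fin N) (Fin N) ℝ) - ε • L) ^ k) *ᵥ x0) i) atTop
      (nhds ((N : ℝ)⁻¹ * ∑ j, x0 j)) := by
  have i0 : Fin N := ⟨0, hN⟩
  have ne : (univ : Finset (Fin N)).Nonempty := ⟨⟨0, hN⟩, Finset.mem_univ _⟩
  set P : Matrix (Fin N) (Fin N) ℝ := (1 : Matrix (Fin N) (Fin N) ℝ) - ε • L with hPdef
  have hPapp : ∀ i j, P i j = (if i = j then (1:ℝ) else 0) - ε * L i j := by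
    intro i j
    simp [hPdef, Matrix.sub_apply, Matrix.one_apply]
  -- supremum of diagonal
  have hLd : ∀ i, 0 ≤ L i i := fun i => by
    rw [hdiag i]; exact Finset.sum_nonneg fun j _ => ha i j
  have hbdd : BddAbove (Set.range fun i => L i i) := (Set.finite_range _).bddAbove
  have hsup_nonneg : 0 ≤ ⨆ i, L i i := le_trans (hLd ⟨0, hN⟩) (le_ciSup hbdd _)
  have hsup_pos : 0 < ⨆ i, L i i := by
    rcases eq_or_lt_of_le hsup_nonneg with h | h
    · rw [← h, div_zero] at hε'; linarith
    · exact h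
  have hεd : ε * (⨆ i, L i i) < 1 := (lt_div_iff₀ hsup_pos).1 hε'
  have hεL : ∀ i, ε * L i i < 1 := fun i =>
    lt_of_le_of_lt (mul_le_mul_of_nonneg_left (le_ciSup hbdd i) hε.le) hεd
  -- P facts
  have hPdiag : ∀ i, 0 < P i i := fun i => by
    rw [hPapp i i, if_pos rfl]; linarith [hεL i]
  have hP0 : ∀ i j, 0 ≤ P i j := by
    intro i j
    by_cases h : i = j
    · subst h; exact (hPdiag i).le
    · rw [hPapp i j, if_neg h, hoff i j h]
      have := mul_nonneg hε.le (ha i j); linarith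
  have hLrow : ∀ i, ∑ j, L i j = 0 := by
    intro i
    rw [← Finset.add_sum_erase univ (fun j => L i j) (Finset.mem_univ i)]
    have h1 : ∑ j ∈ univ.erase i, L i j = - ∑ j ∈ univ.erase i, a i j := by
      rw [← Finset.sum_neg_distrib]
      exact Finset.sum_congr rfl fun j hj => hoff i j (Finset.ne_of_mem_erase hj).symm
    have h4 : L i i = ∑ j ∈ univ.erase i, a i j := by
      rw [hdiag i, Finset.sdiff_singleton_eq_erase]
    linarith
  have hLcol : ∀ j, ∑ i, L i j = 0 := by
    intro j
    have h2 : ∑ i ∈ univ.erase j, a j i = ∑ i ∈ univ.erase j, a i j := by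
      have hb := hbal j
      rw [← Finset.add_sum_erase univ (fun k => a j k) (Finset.mem_univ j),
          ← Finset.add_sum_erase univ (fun k => a k j) (Finset.mem_univ j)] at hb
      linarith
    rw [← Finset.add_sum_erase univ (fun i => L i j) (Finset.mem_univ j)]
    have h3 : ∑ i ∈ univ.erase j, L i j = - ∑ i ∈ univ.erase j, a i j := by
      rw [← Finset.sum_neg_distrib]
      exact Finset.sum_congr rfl fun i hi => hoff i j (Finset.ne_of_mem_erase hi)
    have h4 : L j j = ∑ i ∈ univ.erase j, a j i := by
      rw [hdiag j, Finset.sdiff_singleton_eq_erase]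
    linarith
  have hProw : ∀ i, ∑ j, P i j = 1 := by
    intro i
    simp only [hPapp]
    rw [Finset.sum_sub_distrib, ← Finset.mul_sum, hLrow i, mul_zero, sub_zero,
      Finset.sum_ite_eq]
    simp
  have hPcol : ∀ j, ∑ i, P i j = 1 := by
    intro j
    simp only [hPapp]
    rw [Finset.sum_sub_distrib, ← Finset.mul_sum, hLcol j, mul_zero, sub_zero,
      Finset.sum_ite_eq']
    simp
  have hPone : P *ᵥ (fun _ => (1:ℝ)) = fun _ => 1 := by
    funext i
    simp only [Matrix.mulVec, dotProduct, mul_one]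
    exact hProw i
  have honeP : Matrix.vecMul (fun _ => (1:ℝ)) P = fun _ => 1 := by
    funext j
    simp only [Matrix.vecMul, dotProduct, one_mul]
    exact hPcol j
  refine ⟨hP0, hPone, honeP, hPdiag, ?_⟩
  -- powers
  have hPowRow : ∀ n, (P ^ n) *ᵥ (fun _ => (1:ℝ)) = fun _ => 1 := by
    intro n
    induction n with
    | zero => simp
    | succ n ih => rw [pow_succ', ← Matrix.mulVec_mulVec, ih, hPone]
  have hPowCol : ∀ n, Matrix.vecMul (fun _ => (1:ℝ)) (P ^ n) = fun _ => 1 := by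
    intro n
    induction n with
    | zero => simp
    | succ n ih => rw [pow_succ, ← Matrix.vecMul_vecMul, ih, honeP]
  have hPowRowSum : ∀ n i, ∑ j, (P ^ n) i j = 1 := by
    intro n i
    have h := congrFun (hPowRow n) i
    simpa [Matrix.mulVec, dotProduct] using h
  -- primitivity
  have hconn' : ∀ i j, Relation.ReflTransGen (fun p q => 0 < P p q) i j := by
    intro i j
    refine Relation.ReflTransGen.mono ?_ _ _ (hconn i j)
    rintro p q ⟨hpq, hapq⟩
    rw [hPapp p q, if_neg hpq, hoff p q hpq]
    have := mul_pos hε hapq; linarith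
  have hEv : ∀ p : Fin N × Fin N, ∃ k, ∀ n ≥ k, 0 < (P ^ n) p.1 p.2 :=
    fun p => pow_entry_eventually_pos P hP0 hPdiag (hconn' p.1 p.2)
  choose K hK using hEv
  set m : ℕ := (Finset.univ.sup K) + 1 with hm
  have hm0 : 0 < m := Nat.succ_pos _
  set Q := P ^ m with hQ
  have hQpos : ∀ i j, 0 < Q i j := fun i j =>
    hK (i, j) m (Nat.le_succ_of_le (Finset.le_sup (Finset.mem_univ (i, j))))
  have ne2 : (univ : Finset (Fin N × Fin N)).Nonempty := ⟨(⟨0, hN⟩, ⟨0, hN⟩), Finset.mem_univ _⟩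
  set δ : ℝ := Finset.univ.inf' ne2 (fun p : Fin N × Fin N => Q p.1 p.2) with hδdef
  have hδpos : 0 < δ := by
    rw [hδdef, Finset.lt_inf'_iff]
    exact fun p _ => hQpos p.1 p.2
  have hδle : ∀ i j, δ ≤ Q i j := fun i j => Finset.inf'_le _ (Finset.mem_univ (i, j))
  have hδ1 : δ ≤ 1 := by
    have h1 : δ ≤ Q ⟨0, hN⟩ ⟨0, hN⟩ := hδle _ _
    have h2 : Q ⟨0, hN⟩ ⟨0, hN⟩ ≤ ∑ j, Q ⟨0, hN⟩ j :=
      Finset.single_le_sum (fun j _ => (hQpos _ j).le) (Finset.mem_univ _)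
    have h3 := hPowRowSum m (⟨0, hN⟩ : Fin N)
    rw [← hQ] at h3
    linarith
  -- iteration
  intro x0 i
  set c : ℝ := (N : ℝ)⁻¹ * ∑ j, x0 j with hc
  set y : ℕ → Fin N → ℝ := fun k => (P ^ k) *ᵥ x0 with hy
  show Tendsto (fun k => y k i) atTop (nhds c)
  have hy_succ : ∀ k, y (k + 1) = P *ᵥ y k := by
    intro k
    simp only [hy]
    rw [pow_succ', ← Matrix.mulVec_mulVec]
  have hy_addm : ∀ k, y (k + m) = Q *ᵥ y k := by
    intro k
    have hpp : P ^ (k + m) = P ^ m * P ^ k := by rw [← pow_add, add_comm]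
    simp only [hy]
    rw [hpp, ← Matrix.mulVec_mulVec, hQ]
  set s : ℕ → ℝ := fun k => univ.sup' ne (y k) - univ.inf' ne (y k) with hs
  have hs_nonneg : ∀ k, 0 ≤ s k := fun k => sub_nonneg.2
    (le_trans (Finset.inf'_le _ (Finset.mem_univ i)) (Finset.le_sup' _ (Finset.mem_univ i)))
  have hs_mono : Antitone s := by
    apply antitone_nat_of_succ_le
    intro k
    have h := spread_contract ne P 0 le_rfl (fun p q => hP0 p q) hProw (y k)
    rw [← hy_succ k] at h
    simpa [hs] using h
  have hs_m : ∀ k, s (k + m) ≤ (1 - δ) * s k := by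
    intro k
    have h := spread_contract ne Q δ hδpos.le hδle (fun p => by
      have := hPowRowSum m p; rw [← hQ] at this; exact this) (y k)
    rw [← hy_addm k] at h
    exact h
  have hs_geo : ∀ j, s (j * m) ≤ (1 - δ) ^ j * s 0 := by
    intro j
    induction j with
    | zero => simp
    | succ j ih =>
      have heq : (j + 1) * m = j * m + m := by ring
      calc s ((j + 1) * m) = s (j * m + m) := by rw [heq]
        _ ≤ (1 - δ) * s (j * m) := hs_m (j * m)
        _ ≤ (1 - δ) * ((1 - δ) ^ j * s 0) :=
            mul_le_mul_of_nonneg_left ih (by linarith)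
        _ = (1 - δ) ^ (j + 1) * s 0 := by ring
  have hs_bound : ∀ k, s k ≤ (1 - δ) ^ (k / m) * s 0 := fun k =>
    le_trans (hs_mono (Nat.div_mul_le_self k m)) (hs_geo (k / m))
  have hsumy : ∀ k, ∑ j, y k j = ∑ j, x0 j := by
    intro k
    have h1 : (fun _ => (1:ℝ)) ⬝ᵥ ((P ^ k) *ᵥ x0) = (fun _ => (1:ℝ)) ⬝ᵥ x0 := by
      rw [dotProduct_mulVec, hPowCol k]
    simpa [hy, dotProduct] using h1
  have hNpos : (0:ℝ) < N := by exact_mod_cast hN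
  have hcy : ∀ k, univ.inf' ne (y k) ≤ c ∧ c ≤ univ.sup' ne (y k) := by
    intro k
    have h1 : ∑ j, y k j ≤ (N : ℝ) * univ.sup' ne (y k) := by
      calc ∑ j, y k j ≤ ∑ _j : Fin N, univ.sup' ne (y k) :=
            Finset.sum_le_sum fun j _ => Finset.le_sup' _ (Finset.mem_univ j)
        _ = (N : ℝ) * univ.sup' ne (y k) := by
            rw [Finset.sum_const, Finset.card_univ, Fintype.card_fin, nsmul_eq_mul]
    have h2 : (N : ℝ) * univ.inf' ne (y k) ≤ ∑ j, y k j := by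
      calc (N : ℝ) * univ.inf' ne (y k) = ∑ _j : Fin N, univ.inf' ne (y k) := by
            rw [Finset.sum_const, Finset.card_univ, Fintype.card_fin, nsmul_eq_mul]
        _ ≤ ∑ j, y k j := Finset.sum_le_sum fun j _ => Finset.inf'_le _ (Finset.mem_univ j)
    have h3 : c = (N : ℝ)⁻¹ * ∑ j, y k j := by rw [hc, hsumy k]
    constructor
    · have h5 := mul_le_mul_of_nonneg_left h2 (inv_pos.2 hNpos).le
      have h6 : (N : ℝ)⁻¹ * ((N : ℝ) * univ.inf' ne (y k)) = univ.inf' ne (y k) := by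
        field_simp
      rw [h3]; linarith
    · have h5 := mul_le_mul_of_nonneg_left h1 (inv_pos.2 hNpos).le
      have h6 : (N : ℝ)⁻¹ * ((N : ℝ) * univ.sup' ne (y k)) = univ.sup' ne (y k) := by
        field_simp
      rw [h3]; linarith
  have habs : ∀ k, |y k i - c| ≤ s k := by
    intro k
    obtain ⟨h1, h2⟩ := hcy k
    have h3 : y k i ≤ univ.sup' ne (y k) := Finset.le_sup' _ (Finset.mem_univ i)
    have h4 : univ.inf' ne (y k) ≤ y k i := Finset.inf'_le _ (Finset.mem_univ i)
    rw [abs_le]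
    constructor <;> simp only [hs] <;> linarith
  have hdiv : Tendsto (fun k : ℕ => k / m) atTop atTop := by
    apply Filter.tendsto_atTop_atTop.2
    intro b
    exact ⟨b * m, fun k hk => (Nat.le_div_iff_mul_le hm0).2 hk⟩
  have hbt : Tendsto (fun k => (1 - δ) ^ (k / m) * s 0) atTop (nhds 0) := by
    have h3 := (tendsto_pow_atTop_nhds_zero_of_lt_one (by linarith : (0:ℝ) ≤ 1 - δ)
      (by linarith : (1:ℝ) - δ < 1)).comp hdiv
    simpa using h3.mul_const (s 0)
  rw [tendsto_iff_dist_tendsto_zero]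
  simp only [Real.dist_eq]
  exact squeeze_zero (fun k => abs_nonneg _)
    (fun k => le_trans (habs k) (hs_bound k)) hbt
end
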